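/- arXiv:1905.04570 — 4 statements merged into one kernel-verified Lean document; each statement's English description precedes it below -/
import Mathlib

section
/- The Weyl group W acts transitively on the set 𝓔: for any x, y ∈ 𝓔 there exists w ∈ W with w(x) = y. -/
/-- The Picard lattice `L = ℤ^10` of a rational elliptic surface,
with basis `H, E_1, …, E_9` (index `0` is `H`, index `i+1` is `E_{i+1}`). -/
abbrev L : Type := Fin 10 → ℤ

/-- The hyperplane class `H`. -/
def Hcl : L := fun j => if j = 0 then 1 else 0

/-- The exceptional classes `E_1, …, E_9` (indexed by `Fin 9`). -/
def Ecl (i : Fin 9) : L := fun j => if j = i.succ then 1 else 0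

/-- The intersection form: `⟨H,H⟩ = 1`, `⟨E_i,E_i⟩ = -1`, with `H, E_1, …, E_9`
pairwise orthogonal. -/
def form (x y : L) : ℤ := x 0 * y 0 - ∑ i : Fin 9, x i.succ * y i.succ

/-- The fiber class `F = 3H - E_1 - ⋯ - E_9 = -K_X`. -/
def Fcl : L := (3 : ℤ) • Hcl - ∑ i : Fin 9, Ecl i

/-- The set `B = {E_1 - E_2, …, E_8 - E_9, H - E_1 - E_2 - E_3}` of simple roots. -/
def simpleRoots : Set L :=
  (Set.range fun i : Fin 8 => Ecl i.castSucc - Ecl i.succ) ∪ {Hcl - Ecl 0 - Ecl 1 - Ecl 2}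

/-- The set `𝓔` of classes of `(-1)`-curves:
`x ∈ L` with `⟨x,x⟩ = -1` and `⟨x,F⟩ = 1`. -/
def negCurves : Set L := {x | form x x = -1 ∧ form x Fcl = 1}

/-- The Weyl group `W` of `X`: the subgroup of `ℤ`-linear automorphisms of `L`
generated by the reflections `s_β(D) = D + ⟨D,β⟩β` for `β ∈ B`. -/
def Weyl : Subgroup (L ≃ₗ[ℤ] L) :=
  Subgroup.closure {w | ∃ β ∈ simpleRoots, ∀ D, w D = D + form D β • β}

/-! ### Auxiliary material -/

section Aux

lemma form_comm (x y : L) : form x y = form y x := by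
  simp [form, mul_comm]

lemma form_add_left (x y z : L) : form (x + y) z = form x z + form y z := by
  simp [form, add_mul, Finset.sum_add_distrib]; ring

lemma form_smul_left (c : ℤ) (x y : L) : form (c • x) y = c * form x y := by
  simp only [form, Pi.smul_apply, smul_eq_mul]
  rw [mul_sub, Finset.mul_sum]
  congr 1
  · ring
  · exact Finset.sum_congr rfl fun i _ => (mul_assoc _ _ _)

lemma form_add_right (x y z : L) : form x (y + z) = form x y + form x z := by
  rw [form_comm, form_add_left, form_comm y x, form_comm z x]

lemma form_smul_right (c : ℤ) (x y : L) : form x (c • y) = c * form x y := by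
  rw [form_comm, form_smul_left, form_comm]

lemma form_sub_right (x y z : L) : form x (y - z) = form x y - form x z := by
  have : y - z = y + (-1 : ℤ) • z := by funext j; simp; ring
  rw [this, form_add_right, form_smul_right]; ring

lemma form_Ecl_right (x : L) (i : Fin 9) : form x (Ecl i) = - x i.succ := by
  simp [form, Ecl, Fin.succ_inj, mul_ite, Finset.sum_ite_eq']
  exact fun h => absurd h.symm (Fin.succ_ne_zero i)

lemma form_Hcl_right (x : L) : form x Hcl = x 0 := by
  simp [form, Hcl, Fin.succ_ne_zero]

lemma form_Fcl_right (x : L) : form x Fcl = 3 * x 0 + ∑ i : Fin 9, x i.succ := by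
  have h : ∀ j, Fcl j = if j = 0 then 3 else -1 := by decide
  simp [form, h, Fin.succ_ne_zero]; ring

/-- The reflection in a root `β` as a linear automorphism of `L`. -/
def reflLE (β : L) (h : form β β = -2) : L ≃ₗ[ℤ] L where
  toFun D := D + form D β • β
  invFun D := D + form D β • β
  map_add' a b := by
    show (a + b) + form (a + b) β • β = (a + form a β • β) + (b + form b β • β)
    rw [form_add_left]; funext j; simp; ring
  map_smul' c a := by
    show (c • a) + form (c • a) β • β = (RingHom.id ℤ) c • (a + form a β • β)
    rw [form_smul_left]; funext j; simp; ring
  left_inv D := by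
    show (D + form D β • β) + form (D + form D β • β) β • β = D
    have h2 : form (D + form D β • β) β = - form D β := by
      rw [form_add_left, form_smul_left, h]; ring
    rw [h2]; funext j; simp
  right_inv D := by
    show (D + form D β • β) + form (D + form D β • β) β • β = D
    have h2 : form (D + form D β • β) β = - form D β := by
      rw [form_add_left, form_smul_left, h]; ring
    rw [h2]; funext j; simp

lemma reflLE_apply (β : L) (h : form β β = -2) (D : L) :
    reflLE β h D = D + form D β • β := rfl

lemma reflLE_mem (β : L) (h : form β β = -2) (hβ : β ∈ simpleRoots) :
    reflLE β h ∈ Weyl :=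
  Subgroup.subset_closure ⟨β, hβ, fun _ => rfl⟩

/-- Extension of a permutation of `Fin 9` to `Fin 10`, fixing `0`. -/
def ext9 (σ : Equiv.Perm (Fin 9)) : Equiv.Perm (Fin 10) where
  toFun j := Fin.cases 0 (fun k => (σ k).succ) j
  invFun j := Fin.cases 0 (fun k => (σ⁻¹ k).succ) j
  left_inv j := by cases j using Fin.cases <;> simp
  right_inv j := by cases j using Fin.cases <;> simp

@[simp] lemma ext9_zero (σ : Equiv.Perm (Fin 9)) : ext9 σ 0 = 0 := rfl
@[simp] lemma ext9_succ (σ : Equiv.Perm (Fin 9)) (k : Fin 9) : ext9 σ k.succ = (σ k).succ := by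
  simp [ext9]

/-- The permutation of the `E_i` coordinates as a linear automorphism of `L`. -/
def permL (σ : Equiv.Perm (Fin 9)) : L ≃ₗ[ℤ] L where
  toFun x := x ∘ ext9 σ
  invFun x := x ∘ ext9 σ⁻¹
  map_add' a b := rfl
  map_smul' c a := rfl
  left_inv x := by funext j; cases j using Fin.cases <;> simp
  right_inv x := by funext j; cases j using Fin.cases <;> simp

@[simp] lemma permL_apply_zero (σ : Equiv.Perm (Fin 9)) (x : L) : permL σ x 0 = x 0 := rfl
@[simp] lemma permL_apply_succ (σ : Equiv.Perm (Fin 9)) (x : L) (k : Fin 9) :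
    permL σ x k.succ = x (σ k).succ := by
  show x (ext9 σ k.succ) = _; simp

lemma permL_mul (σ τ : Equiv.Perm (Fin 9)) : permL (σ * τ) = permL τ * permL σ := by
  apply LinearEquiv.ext; intro x; funext j
  cases j using Fin.cases with
  | zero => rfl
  | succ k =>
    show x (ext9 (σ * τ) k.succ) = permL τ (permL σ x) k.succ
    simp [Equiv.Perm.mul_apply]

lemma permL_one : permL 1 = 1 := by
  apply LinearEquiv.ext; intro x; funext j
  cases j using Fin.cases <;> rfl

lemma form_Ediff (x : L) (a b : Fin 9) : form x (Ecl a - Ecl b) = x b.succ - x a.succ := by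
  rw [form_sub_right, form_Ecl_right, form_Ecl_right]; ring

lemma Ecl_succ_self (a : Fin 9) : Ecl a a.succ = 1 := by simp [Ecl]
lemma Ecl_succ_ne (a b : Fin 9) (h : b ≠ a) : Ecl a b.succ = 0 := by
  simp [Ecl, Fin.succ_inj, h]
lemma Ecl_zero (a : Fin 9) : Ecl a 0 = 0 := by
  simp [Ecl, (Fin.succ_ne_zero a).symm]

lemma adj_mem (i : Fin 8) : permL (Equiv.swap i.castSucc i.succ) ∈ Weyl := by
  apply Subgroup.subset_closure
  refine ⟨Ecl i.castSucc - Ecl i.succ, Or.inl ⟨i, rfl⟩, ?_⟩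
  intro D; funext j
  have hne : i.castSucc ≠ i.succ := (Fin.castSucc_lt_succ : i.castSucc < i.succ).ne
  cases j using Fin.cases with
  | zero =>
    show D 0 = D 0 + form D _ * _
    rw [Pi.sub_apply, Ecl_zero, Ecl_zero]; ring
  | succ k =>
    show D ((Equiv.swap i.castSucc i.succ k).succ) =
      D k.succ + form D _ * ((Ecl i.castSucc - Ecl i.succ) k.succ)
    rw [form_Ediff, Pi.sub_apply]
    by_cases h1 : k = i.castSucc
    · subst h1
      rw [Equiv.swap_apply_left, Ecl_succ_self, Ecl_succ_ne _ _ hne]; ring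
    · by_cases h2 : k = i.succ
      · subst h2
        rw [Equiv.swap_apply_right, Ecl_succ_self, Ecl_succ_ne _ _ (Ne.symm hne)]; ring
      · rw [Equiv.swap_apply_of_ne_of_ne h1 h2, Ecl_succ_ne _ _ h1, Ecl_succ_ne _ _ h2]; ring

lemma swap_mem' : ∀ (n : ℕ) (p q : Fin 9), q.val = p.val + 1 + n →
    permL (Equiv.swap p q) ∈ Weyl := by
  intro n
  induction n with
  | zero =>
    intro p q hq
    obtain ⟨i, h1, h2⟩ : ∃ i : Fin 8, p = i.castSucc ∧ q = i.succ := by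
      refine ⟨⟨p.val, by omega⟩, by ext; rfl, by ext; simp [Fin.succ]; omega⟩
    rw [h1, h2]; exact adj_mem i
  | succ n ih =>
    intro p q hq
    set r : Fin 9 := ⟨q.val - 1, by omega⟩ with hr
    have hpr : permL (Equiv.swap p r) ∈ Weyl := ih p r (by simp [hr]; omega)
    have hrq : permL (Equiv.swap r q) ∈ Weyl := by
      obtain ⟨i, h1, h2⟩ : ∃ i : Fin 8, r = i.castSucc ∧ q = i.succ := by
        refine ⟨⟨r.val, by simp [hr]; omega⟩, by ext; rfl, by ext; simp [hr, Fin.succ]; omega⟩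
      rw [h1, h2]; exact adj_mem i
    have hne1 : p ≠ r := by intro h; apply_fun Fin.val at h; simp [hr] at h; omega
    have hne2 : p ≠ q := by intro h; apply_fun Fin.val at h; omega
    have key : Equiv.swap r q * Equiv.swap p r * Equiv.swap r q = Equiv.swap p q := by
      rw [Equiv.swap_mul_swap_mul_swap hne1 hne2, Equiv.swap_comm]
    rw [← key, permL_mul, permL_mul]
    exact mul_mem hrq (mul_mem hpr hrq)

lemma swap_mem (p q : Fin 9) : permL (Equiv.swap p q) ∈ Weyl := by
  rcases lt_trichotomy p.val q.val with h | h | h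
  · exact swap_mem' (q.val - p.val - 1) p q (by omega)
  · have : p = q := by ext; omega
    rw [this, Equiv.swap_self]
    have h1 : (Equiv.refl (Fin 9)) = (1 : Equiv.Perm (Fin 9)) := rfl
    rw [h1, permL_one]; exact one_mem _
  · rw [Equiv.swap_comm]
    exact swap_mem' (p.val - q.val - 1) q p (by omega)

lemma permL_mem (σ : Equiv.Perm (Fin 9)) : permL σ ∈ Weyl := by
  refine Equiv.Perm.swap_induction_on σ ?_ ?_
  · rw [permL_one]; exact one_mem _
  · intro f x y hxy ihf
    rw [permL_mul]; exact mul_mem ihf (swap_mem x y)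

lemma form_permL (σ : Equiv.Perm (Fin 9)) (x y : L) :
    form (permL σ x) (permL σ y) = form x y := by
  simp only [form, permL_apply_zero, permL_apply_succ]
  congr 1
  exact Fintype.sum_equiv σ _ _ (fun k => rfl)

lemma form_permL_Fcl (σ : Equiv.Perm (Fin 9)) (x : L) :
    form (permL σ x) Fcl = form x Fcl := by
  rw [form_Fcl_right, form_Fcl_right, permL_apply_zero]
  congr 1
  simp only [permL_apply_succ]
  exact Fintype.sum_equiv σ _ _ (fun k => rfl)

lemma permL_negCurves (σ : Equiv.Perm (Fin 9)) {x : L} (hx : x ∈ negCurves) :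
    permL σ x ∈ negCurves :=
  ⟨by rw [form_permL]; exact hx.1, by rw [form_permL_Fcl]; exact hx.2⟩

lemma reflLE_negCurves (β : L) (h : form β β = -2) (hF : form β Fcl = 0)
    {x : L} (hx : x ∈ negCurves) : reflLE β h x ∈ negCurves := by
  constructor
  · rw [reflLE_apply, form_add_left, form_add_right, form_add_right,
      form_smul_left, form_smul_right, form_smul_right, form_smul_left, form_comm β x, h]
    have := hx.1; nlinarith [this]
  · rw [reflLE_apply, form_add_left, form_smul_left, hF]
    have := hx.2; linarith

lemma permL_Ecl (σ : Equiv.Perm (Fin 9)) (i : Fin 9) :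
    permL σ (Ecl i) = Ecl (σ⁻¹ i) := by
  funext j
  cases j using Fin.cases with
  | zero => rw [permL_apply_zero, Ecl_zero, Ecl_zero]
  | succ k =>
    rw [permL_apply_succ]
    by_cases h : σ k = i
    · have h' : k = σ⁻¹ i := by rw [← h]; simp
      rw [h, Ecl_succ_self, h', Ecl_succ_self]
    · have h' : k ≠ σ⁻¹ i := by
        intro hc; apply h; rw [hc]; simp
      rw [Ecl_succ_ne _ _ h, Ecl_succ_ne _ _ h']

/-! ### Integer arithmetic lemmas -/

lemma int_le_sq (t : ℤ) : t ≤ t * t := by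
  rcases le_or_gt t 0 with h | h
  · nlinarith [mul_self_nonneg t]
  · nlinarith

lemma sum9 (f : Fin 9 → ℤ) : ∑ i, f i = f 0 + f 1 + f 2 + f 3 + f 4 + f 5 + f 6 + f 7 + f 8 := by
  simp [Fin.sum_univ_succ, Fin.succ]; ring

set_option maxHeartbeats 1000000 in
lemma cauchy9 (b0 b1 b2 b3 b4 b5 b6 b7 b8 : ℤ) :
    (b0+b1+b2+b3+b4+b5+b6+b7+b8)*(b0+b1+b2+b3+b4+b5+b6+b7+b8)
      ≤ 9*(b0*b0+b1*b1+b2*b2+b3*b3+b4*b4+b5*b5+b6*b6+b7*b7+b8*b8) := by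
  have id9 : 9*(b0*b0+b1*b1+b2*b2+b3*b3+b4*b4+b5*b5+b6*b6+b7*b7+b8*b8)
      - (b0+b1+b2+b3+b4+b5+b6+b7+b8)*(b0+b1+b2+b3+b4+b5+b6+b7+b8) =
      (b0-b1)^2 + (b0-b2)^2 + (b0-b3)^2 + (b0-b4)^2 + (b0-b5)^2 + (b0-b6)^2 + (b0-b7)^2 + (b0-b8)^2
      + (b1-b2)^2 + (b1-b3)^2 + (b1-b4)^2 + (b1-b5)^2 + (b1-b6)^2 + (b1-b7)^2 + (b1-b8)^2
      + (b2-b3)^2 + (b2-b4)^2 + (b2-b5)^2 + (b2-b6)^2 + (b2-b7)^2 + (b2-b8)^2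
      + (b3-b4)^2 + (b3-b5)^2 + (b3-b6)^2 + (b3-b7)^2 + (b3-b8)^2
      + (b4-b5)^2 + (b4-b6)^2 + (b4-b7)^2 + (b4-b8)^2
      + (b5-b6)^2 + (b5-b7)^2 + (b5-b8)^2
      + (b6-b7)^2 + (b6-b8)^2 + (b7-b8)^2 := by ring
  linarith [sq_nonneg (b0-b1), sq_nonneg (b0-b2), sq_nonneg (b0-b3), sq_nonneg (b0-b4),
    sq_nonneg (b0-b5), sq_nonneg (b0-b6), sq_nonneg (b0-b7), sq_nonneg (b0-b8),
    sq_nonneg (b1-b2), sq_nonneg (b1-b3), sq_nonneg (b1-b4), sq_nonneg (b1-b5),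
    sq_nonneg (b1-b6), sq_nonneg (b1-b7), sq_nonneg (b1-b8),
    sq_nonneg (b2-b3), sq_nonneg (b2-b4), sq_nonneg (b2-b5), sq_nonneg (b2-b6),
    sq_nonneg (b2-b7), sq_nonneg (b2-b8),
    sq_nonneg (b3-b4), sq_nonneg (b3-b5), sq_nonneg (b3-b6), sq_nonneg (b3-b7), sq_nonneg (b3-b8),
    sq_nonneg (b4-b5), sq_nonneg (b4-b6), sq_nonneg (b4-b7), sq_nonneg (b4-b8),
    sq_nonneg (b5-b6), sq_nonneg (b5-b7), sq_nonneg (b5-b8),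
    sq_nonneg (b6-b7), sq_nonneg (b6-b8), sq_nonneg (b7-b8)]

set_option maxHeartbeats 1000000 in
lemma a_nonneg (a b0 b1 b2 b3 b4 b5 b6 b7 b8 : ℤ)
    (h1 : 3*a + (b0+b1+b2+b3+b4+b5+b6+b7+b8) = 1)
    (h2 : a*a - (b0*b0+b1*b1+b2*b2+b3*b3+b4*b4+b5*b5+b6*b6+b7*b7+b8*b8) = -1) :
    0 ≤ a := by
  by_contra h
  push_neg at h
  have hc := cauchy9 b0 b1 b2 b3 b4 b5 b6 b7 b8
  have hs : b0+b1+b2+b3+b4+b5+b6+b7+b8 = 1 - 3*a := by linarith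
  have hq : b0*b0+b1*b1+b2*b2+b3*b3+b4*b4+b5*b5+b6*b6+b7*b7+b8*b8 = a*a + 1 := by linarith
  rw [hs, hq] at hc
  have h6 : -6*a ≤ 8 := by nlinarith [hc]
  have ha1 : a = -1 := by omega
  subst ha1
  have l0 := int_le_sq b0
  have l1 := int_le_sq b1
  have l2 := int_le_sq b2
  have l3 := int_le_sq b3
  have l4 := int_le_sq b4
  have l5 := int_le_sq b5
  have l6 := int_le_sq b6
  have l7 := int_le_sq b7
  have l8 := int_le_sq b8
  linarith

set_option maxHeartbeats 1000000 in
lemma descent_ineq (a b0 b1 b2 b3 b4 b5 b6 b7 b8 : ℤ)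
    (m01 : b0 ≤ b1) (m12 : b1 ≤ b2) (m23 : b2 ≤ b3) (m34 : b3 ≤ b4)
    (m45 : b4 ≤ b5) (m56 : b5 ≤ b6) (m67 : b6 ≤ b7) (m78 : b7 ≤ b8)
    (h1 : 3*a + (b0+b1+b2+b3+b4+b5+b6+b7+b8) = 1)
    (h2 : a*a - (b0*b0+b1*b1+b2*b2+b3*b3+b4*b4+b5*b5+b6*b6+b7*b7+b8*b8) = -1)
    (ha : 1 ≤ a) : a + (b0 + b1 + b2) ≤ -1 := by
  by_contra h
  push_neg at h
  have h0 : 0 ≤ a + (b0 + b1 + b2) := by linarith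
  have hy2 : 0 ≤ 3*b2 + a := by linarith
  have hsum39 : (3*b3+a)+(3*b4+a)+(3*b5+a)+(3*b6+a)+(3*b7+a)+(3*b8+a) ≤ 3 := by linarith
  have h6y2 : 6*(3*b2+a) ≤ (3*b3+a)+(3*b4+a)+(3*b5+a)+(3*b6+a)+(3*b7+a)+(3*b8+a) := by linarith
  have e2 : 3*b2 + a = 0 := by
    by_contra h'
    have h1' : 1 ≤ 3*b2 + a := by
      rcases lt_or_ge (3*b2+a) 1 with hlt | hge
      · exact absurd (by linarith) h'
      · exact hge
    linarith
  have e1 : 3*b1 + a = 0 := by linarith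
  have e0 : 3*b0 + a = 0 := by linarith
  have hq : (3*b0+a)^2 + (3*b1+a)^2 + (3*b2+a)^2 + (3*b3+a)^2 + (3*b4+a)^2 + (3*b5+a)^2
      + (3*b6+a)^2 + (3*b7+a)^2 + (3*b8+a)^2 = 6*a + 9 := by
    linear_combination (-9)*h2 + 6*a*h1
  have q3 : 0 ≤ (3*b3+a) * (3 - (3*b3+a)) := mul_nonneg (by linarith) (by linarith)
  have q4 : 0 ≤ (3*b4+a) * (3 - (3*b4+a)) := mul_nonneg (by linarith) (by linarith)
  have q5 : 0 ≤ (3*b5+a) * (3 - (3*b5+a)) := mul_nonneg (by linarith) (by linarith)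
  have q6 : 0 ≤ (3*b6+a) * (3 - (3*b6+a)) := mul_nonneg (by linarith) (by linarith)
  have q7 : 0 ≤ (3*b7+a) * (3 - (3*b7+a)) := mul_nonneg (by linarith) (by linarith)
  have q8 : 0 ≤ (3*b8+a) * (3 - (3*b8+a)) := mul_nonneg (by linarith) (by linarith)
  rw [e0, e1, e2] at hq
  norm_num at hq
  have r3 : (3*b3+a)^2 ≤ 3*(3*b3+a) := by linear_combination q3
  have r4 : (3*b4+a)^2 ≤ 3*(3*b4+a) := by linear_combination q4
  have r5 : (3*b5+a)^2 ≤ 3*(3*b5+a) := by linear_combination q5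
  have r6 : (3*b6+a)^2 ≤ 3*(3*b6+a) := by linear_combination q6
  have r7 : (3*b7+a)^2 ≤ 3*(3*b7+a) := by linear_combination q7
  have r8 : (3*b8+a)^2 ≤ 3*(3*b8+a) := by linear_combination q8
  linarith [hq, r3, r4, r5, r6, r7, r8, hsum39, ha]

lemma indicator_of (b : Fin 9 → ℤ) (hsum : ∑ i, b i = 1) (hsq : ∑ i, b i * b i = 1) :
    ∃ i0 : Fin 9, ∀ i, b i = if i = i0 then 1 else 0 := by
  have hz : ∑ i, (b i * b i - b i) = 0 := by
    rw [Finset.sum_sub_distrib, hsum, hsq]; ring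
  have hnn : ∀ i ∈ Finset.univ, (0:ℤ) ≤ b i * b i - b i :=
    fun i _ => sub_nonneg.2 (int_le_sq (b i))
  have heach := (Finset.sum_eq_zero_iff_of_nonneg hnn).1 hz
  have h01 : ∀ i, b i = 0 ∨ b i = 1 := by
    intro i
    have h := heach i (Finset.mem_univ i)
    have h' : b i * (b i - 1) = 0 := by linear_combination h
    rcases mul_eq_zero.1 h' with h'' | h''
    exacts [Or.inl h'', Or.inr (by linarith)]
  have hb : ∀ i, b i = if b i = 1 then 1 else 0 := by
    intro i; rcases h01 i with h | h <;> simp [h]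
  have hcard : (Finset.univ.filter (fun i : Fin 9 => b i = 1)).card = 1 := by
    have hs := hsum
    rw [Finset.sum_congr rfl (fun i _ => hb i)] at hs
    rw [Finset.sum_boole] at hs
    exact_mod_cast hs
  obtain ⟨i0, hi0⟩ := Finset.card_eq_one.1 hcard
  refine ⟨i0, fun i => ?_⟩
  by_cases h : i = i0
  · subst h
    have : i ∈ Finset.univ.filter (fun i : Fin 9 => b i = 1) := by
      rw [hi0]; exact Finset.mem_singleton_self i
    simp only [Finset.mem_filter] at this
    simp [this.2]
  · have hni : i ∉ Finset.univ.filter (fun i : Fin 9 => b i = 1) := by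
      rw [hi0]; simp [h]
    simp only [Finset.mem_filter, Finset.mem_univ, true_and] at hni
    rcases h01 i with h' | h'
    · simp [h, h']
    · exact absurd h' hni

end Aux

section Main

def beta0 : L := Hcl - Ecl 0 - Ecl 1 - Ecl 2

lemma beta0_root : form beta0 beta0 = -2 := by decide
lemma beta0_F : form beta0 Fcl = 0 := by decide
lemma beta0_mem : beta0 ∈ simpleRoots := Or.inr rfl
lemma beta0_zero : beta0 0 = 1 := by decide

lemma form_beta0 (x : L) :
    form x beta0 = x 0 + (x (0:Fin 9).succ + x (1:Fin 9).succ + x (2:Fin 9).succ) := by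
  unfold beta0
  rw [form_sub_right, form_sub_right, form_sub_right, form_Hcl_right,
    form_Ecl_right, form_Ecl_right, form_Ecl_right]
  ring

lemma negCurves_sum (x : L) (hx : x ∈ negCurves) :
    3 * x 0 + (x (0:Fin 9).succ + x (1:Fin 9).succ + x (2:Fin 9).succ + x (3:Fin 9).succ
      + x (4:Fin 9).succ + x (5:Fin 9).succ + x (6:Fin 9).succ + x (7:Fin 9).succ
      + x (8:Fin 9).succ) = 1 := by
  have h := hx.2
  rw [form_Fcl_right, sum9] at h
  linarith

lemma negCurves_sumsq (x : L) (hx : x ∈ negCurves) :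
    x 0 * x 0 - (x (0:Fin 9).succ * x (0:Fin 9).succ + x (1:Fin 9).succ * x (1:Fin 9).succ
      + x (2:Fin 9).succ * x (2:Fin 9).succ + x (3:Fin 9).succ * x (3:Fin 9).succ
      + x (4:Fin 9).succ * x (4:Fin 9).succ + x (5:Fin 9).succ * x (5:Fin 9).succ
      + x (6:Fin 9).succ * x (6:Fin 9).succ + x (7:Fin 9).succ * x (7:Fin 9).succ
      + x (8:Fin 9).succ * x (8:Fin 9).succ) = -1 := by
  have h := hx.1
  unfold form at h
  rw [sum9 (fun i => x i.succ * x i.succ)] at h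
  exact h

lemma negCurves_nonneg {x : L} (hx : x ∈ negCurves) : 0 ≤ x 0 :=
  a_nonneg (x 0) _ _ _ _ _ _ _ _ _ (negCurves_sum x hx) (negCurves_sumsq x hx)

lemma base_to_E0 (x : L) (hx : x ∈ negCurves) (h0 : x 0 = 0) :
    ∃ w ∈ Weyl, w x = Ecl 0 := by
  have hsum : ∑ i : Fin 9, x i.succ = 1 := by
    have h := hx.2
    rw [form_Fcl_right, h0] at h
    linarith
  have hsq : ∑ i : Fin 9, x i.succ * x i.succ = 1 := by
    have h := hx.1
    unfold form at h
    rw [h0] at h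
    linarith
  obtain ⟨i0, hi0⟩ := indicator_of (fun i => x i.succ) hsum hsq
  have hxe : x = Ecl i0 := by
    funext j
    cases j using Fin.cases with
    | zero => rw [h0, Ecl_zero]
    | succ k =>
      have he : Ecl i0 k.succ = if k = i0 then 1 else 0 := by
        by_cases h : k = i0
        · subst h; rw [Ecl_succ_self]; simp
        · rw [Ecl_succ_ne _ _ h]; simp [h]
      rw [he]
      exact hi0 k
  refine ⟨permL (Equiv.swap i0 0), permL_mem _, ?_⟩
  rw [hxe, permL_Ecl]
  rw [Equiv.swap_inv, Equiv.swap_apply_left]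

lemma descent (x : L) (hx : x ∈ negCurves) (hpos : 1 ≤ x 0) :
    ∃ w ∈ Weyl, w x ∈ negCurves ∧ (w x) 0 ≤ x 0 - 1 := by
  set b : Fin 9 → ℤ := fun i => x i.succ with hb
  set σ := Tuple.sort b with hσ
  set x' := permL σ x with hx'def
  have hx' : x' ∈ negCurves := permL_negCurves σ hx
  have hx'0 : x' 0 = x 0 := rfl
  have hmono := Tuple.monotone_sort b
  have hcoord : ∀ k : Fin 9, x' k.succ = (b ∘ σ) k := fun k => by
    rw [hx'def, permL_apply_succ]; rfl
  have m01 : x' (0:Fin 9).succ ≤ x' (1:Fin 9).succ := by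
    rw [hcoord, hcoord]; exact hmono (by decide)
  have m12 : x' (1:Fin 9).succ ≤ x' (2:Fin 9).succ := by
    rw [hcoord, hcoord]; exact hmono (by decide)
  have m23 : x' (2:Fin 9).succ ≤ x' (3:Fin 9).succ := by
    rw [hcoord, hcoord]; exact hmono (by decide)
  have m34 : x' (3:Fin 9).succ ≤ x' (4:Fin 9).succ := by
    rw [hcoord, hcoord]; exact hmono (by decide)
  have m45 : x' (4:Fin 9).succ ≤ x' (5:Fin 9).succ := by
    rw [hcoord, hcoord]; exact hmono (by decide)
  have m56 : x' (5:Fin 9).succ ≤ x' (6:Fin 9).succ := by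
    rw [hcoord, hcoord]; exact hmono (by decide)
  have m67 : x' (6:Fin 9).succ ≤ x' (7:Fin 9).succ := by
    rw [hcoord, hcoord]; exact hmono (by decide)
  have m78 : x' (7:Fin 9).succ ≤ x' (8:Fin 9).succ := by
    rw [hcoord, hcoord]; exact hmono (by decide)
  have h1 := negCurves_sum x' hx'
  have h2 := negCurves_sumsq x' hx'
  have hkey := descent_ineq (x' 0) _ _ _ _ _ _ _ _ _ m01 m12 m23 m34 m45 m56 m67 m78
    (by linarith [h1]) (by linarith [h2]) (by rw [hx'0]; exact hpos)
  refine ⟨reflLE beta0 beta0_root * permL σ, mul_mem (reflLE_mem _ _ beta0_mem) (permL_mem σ),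
    ?_, ?_⟩
  · show reflLE beta0 beta0_root x' ∈ negCurves
    exact reflLE_negCurves _ _ beta0_F hx'
  · show (reflLE beta0 beta0_root x') 0 ≤ x 0 - 1
    rw [reflLE_apply]
    have happ : (x' + form x' beta0 • beta0) 0 = x' 0 + form x' beta0 * beta0 0 := rfl
    rw [happ, beta0_zero, form_beta0]
    linarith [hkey]

lemma to_E0 : ∀ n : ℕ, ∀ x : L, x ∈ negCurves → (x 0).toNat ≤ n → ∃ w ∈ Weyl, w x = Ecl 0 := by
  intro n
  induction n with
  | zero =>
    intro x hx hn
    have h0 : 0 ≤ x 0 := negCurves_nonneg hx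
    exact base_to_E0 x hx (by omega)
  | succ n ih =>
    intro x hx hn
    rcases le_or_gt (x 0) 0 with h | h
    · exact base_to_E0 x hx (le_antisymm h (negCurves_nonneg hx))
    · obtain ⟨w1, hw1, hwx, hwlt⟩ := descent x hx h
      have h0' : 0 ≤ (w1 x) 0 := negCurves_nonneg hwx
      obtain ⟨w2, hw2, hw2x⟩ := ih (w1 x) hwx (by omega)
      refine ⟨w2 * w1, mul_mem hw2 hw1, ?_⟩
      show w2 (w1 x) = Ecl 0
      exact hw2x

end Main

/-- The Weyl group acts transitively on the set `𝓔` of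
`(-1)`-classes. -/
theorem weyl_transitive_on_negCurves :
    ∀ x ∈ negCurves, ∀ y ∈ negCurves, ∃ w ∈ Weyl, w x = y := by
  intro x hx y hy
  obtain ⟨wx, hwx, hx0⟩ := to_E0 (x 0).toNat x hx le_rfl
  obtain ⟨wy, hwy, hy0⟩ := to_E0 (y 0).toNat y hy le_rfl
  refine ⟨wy⁻¹ * wx, mul_mem (inv_mem hwy) hwx, ?_⟩
  show wy⁻¹ (wx x) = y
  rw [hx0, ← hy0]
  rw [show wy⁻¹ = wy.symm from rfl]
  exact wy.symm_apply_apply y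
end

section
/- If D ∈ 𝒩 satisfies ⟨D,F⟩ = 0, then D is a nonnegative real multiple of F. -/
/-- The real Néron–Severi space `L ⊗ ℝ = ℝ^10`. -/
abbrev LR : Type := Fin 10 → ℝ

/-- The natural inclusion `L → L ⊗ ℝ`. -/
def toR (x : L) : LR := fun j => (x j : ℝ)

/-- The intersection form extended to `L ⊗ ℝ`. -/
def formR (x y : LR) : ℝ := x 0 * y 0 - ∑ i : Fin 9, x i.succ * y i.succ

/-- The nef cone `𝒩 ⊆ L ⊗ ℝ`: classes meeting `F` and every `(-1)`-curve
nonnegatively. -/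
def nefCone : Set LR :=
  {D | 0 ≤ formR D (toR Fcl) ∧ ∀ x ∈ negCurves, 0 ≤ formR D (toR x)}


/-- The `(-1)`-class `E₁ + n(E₁ - E_{j-1}) + (n²+n)F`, written in coordinates;
here `j ∈ {2,…,9}` is the `Fin 10`-index of the coordinate of `E_{j-1}`.
These arise from the original `(-1)`-curve `E₁` by Mordell–Weil translations. -/
def cls (j : Fin 10) (n : ℤ) : L := fun k =>
  if k = 0 then 3*(n^2+n)
  else if k = 1 then 1 + n - (n^2+n)
  else if k = j then -n - (n^2+n)
  else -(n^2+n)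

lemma cls_mem {j : Fin 10} (n : ℤ)
    (hj : j = 2 ∨ j = 3 ∨ j = 4 ∨ j = 5 ∨ j = 6 ∨ j = 7 ∨ j = 8 ∨ j = 9) :
    cls j n ∈ negCurves := by
  rcases hj with rfl | rfl | rfl | rfl | rfl | rfl | rfl | rfl <;>
    exact ⟨by simp (config := { decide := true }) [form, cls, Fin.sum_univ_succ]; ring,
      by simp (config := { decide := true }) [form, cls, Fcl, Hcl, Ecl, Fin.sum_univ_succ]; ring⟩

lemma aux_eq_of_forall_int (a b : ℝ) (h : ∀ n : ℤ, 0 ≤ a + n * (a - b)) : a = b := by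
  by_contra hne
  rcases lt_or_gt_of_ne hne with hlt | hgt
  · obtain ⟨n, hn⟩ := exists_int_gt ((-a) / (a - b))
    rw [div_lt_iff_of_neg (by linarith)] at hn
    linarith [h n]
  · obtain ⟨n, hn⟩ := exists_int_lt ((-a) / (a - b))
    rw [lt_div_iff₀ (by linarith)] at hn
    linarith [h n]

/-- If `D` is in the nef cone `𝒩` and `⟨D,F⟩ = 0`, then `D` is
a nonnegative real multiple of the fiber class `F`. -/
theorem nef_orthogonal_to_fiber_is_multiple_of_fiber
    (D : LR) (hD : D ∈ nefCone) (hDF : formR D (toR Fcl) = 0) :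
    ∃ t : ℝ, 0 ≤ t ∧ D = t • toR Fcl := by
  obtain ⟨hF, hE⟩ := hD
  have hDF' := hDF
  simp (config := { decide := true }) [formR, toR, Fcl, Hcl, Ecl, Fin.sum_univ_succ, Fin.succ] at hDF'
  have hE1 : 0 ≤ -(D 1) := by
    have h := hE (Ecl 0) ⟨by decide, by decide⟩
    simp (config := { decide := true }) [formR, toR, Ecl, Fin.sum_univ_succ, Fin.succ] at h
    linarith
  have key : ∀ j : Fin 10,
      (j = 2 ∨ j = 3 ∨ j = 4 ∨ j = 5 ∨ j = 6 ∨ j = 7 ∨ j = 8 ∨ j = 9) →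
      D 1 = D j := by
    intro j hj
    have haux : -(D 1) = -(D j) := by
      apply aux_eq_of_forall_int
      intro n
      have hn := hE _ (cls_mem n hj)
      have e : formR D (toR (cls j n)) = -(D 1) + (n:ℝ) * (-(D 1) - -(D j)) := by
        rcases hj with rfl | rfl | rfl | rfl | rfl | rfl | rfl | rfl <;>
          · simp (config := { decide := true }) [formR, toR, cls, Fin.sum_univ_succ, Fin.succ]
            push_cast
            linear_combination ((n:ℝ)^2 + (n:ℝ)) * hDF'
      rw [e] at hn
      exact hn
    linarith
  refine ⟨-(D 1), hE1, ?_⟩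
  funext k
  have k2 := key 2 (by tauto); have k3 := key 3 (by tauto); have k4 := key 4 (by tauto)
  have k5 := key 5 (by tauto); have k6 := key 6 (by tauto); have k7 := key 7 (by tauto)
  have k8 := key 8 (by tauto); have k9 := key 9 (by tauto)
  fin_cases k <;>
    · simp (config := { decide := true }) [toR, Fcl, Hcl, Ecl, Fin.sum_univ_succ, Fin.succ]
      try linarith
end

section
/- An element x ∈ 𝓔 satisfies ⟨x, H−E_1⟩ = 0 if and only if x = E_i for some i with 2 ≤ i ≤ 9, or x = H − E_1 − E_i for some i with 2 ≤ i ≤ 9. -/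
lemma succ_eq_one' (k : Fin 9) : k.succ = (1 : Fin 10) ↔ k = 0 := by
  rw [show (1:Fin 10) = (0:Fin 9).succ from rfl, Fin.succ_inj]

lemma zero_ne_succ' (k : Fin 9) : ((0 : Fin 10) = k.succ) ↔ False :=
  iff_false_intro (Ne.symm (Fin.succ_ne_zero k))

lemma one_eq_succ' (k : Fin 9) : ((1 : Fin 10) = k.succ) ↔ k = 0 := by
  rw [show (1:Fin 10) = (0:Fin 9).succ from rfl, Fin.succ_inj, eq_comm]

lemma sum_sq_one {s : Finset (Fin 9)} {f : Fin 9 → ℤ} (h : ∑ i ∈ s, f i ^ 2 = 1) :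
    ∃ j ∈ s, f j ^ 2 = 1 ∧ ∀ k ∈ s, k ≠ j → f k = 0 := by
  induction s using Finset.induction with
  | empty => simp at h
  | @insert a t ha ih =>
    rw [Finset.sum_insert ha] at h
    have ht : 0 ≤ ∑ i ∈ t, f i ^ 2 := Finset.sum_nonneg (fun i _ => sq_nonneg _)
    have ha2 : 0 ≤ f a ^ 2 := sq_nonneg _
    by_cases h0 : f a ^ 2 = 0
    · obtain ⟨j, hj, hj1, hj0⟩ := ih (by linarith)
      refine ⟨j, Finset.mem_insert_of_mem hj, hj1, ?_⟩
      intro k hk hkj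
      rcases Finset.mem_insert.1 hk with rfl | hk
      · exact pow_eq_zero_iff two_ne_zero |>.mp h0
      · exact hj0 k hk hkj
    · have h1 : f a ^ 2 = 1 := by omega
      have ht0 : ∑ i ∈ t, f i ^ 2 = 0 := by omega
      refine ⟨a, Finset.mem_insert_self _ _, h1, ?_⟩
      intro k hk hka
      rcases Finset.mem_insert.1 hk with rfl | hk
      · exact absurd rfl hka
      · exact pow_eq_zero_iff two_ne_zero |>.mp
          ((Finset.sum_eq_zero_iff_of_nonneg (fun i _ => sq_nonneg (f i))).1 ht0 k hk)

/-- A class `x ∈ 𝓔` satisfies `⟨x, H - E_1⟩ = 0` if and only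
if `x = E_i` for some `2 ≤ i ≤ 9`, or `x = H - E_1 - E_i` for some `2 ≤ i ≤ 9`.
(Here `Ecl 0 = E_1`, and the indices `i ≠ 0` of `Ecl` correspond to `E_2, …, E_9`.) -/
theorem negCurves_orthogonal_to_H_sub_E1 (x : L) (hx : x ∈ negCurves) :
    form x (Hcl - Ecl 0) = 0 ↔
      (∃ i : Fin 9, i ≠ 0 ∧ x = Ecl i) ∨
      (∃ i : Fin 9, i ≠ 0 ∧ x = Hcl - Ecl 0 - Ecl i) := by
  obtain ⟨h1, h2⟩ := hx
  have hL : form x (Hcl - Ecl 0) = x 0 + x 1 := by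
    simp [form, Hcl, Ecl, Fin.succ_ne_zero, Fin.succ_inj, (Fin.succ_ne_zero _).symm,
      mul_ite, succ_eq_one', Finset.sum_ite_eq', Finset.sum_sub_distrib]
  have h2' : 3 * x 0 + ∑ i : Fin 9, x i.succ = 1 := by
    simp [form, Fcl, Hcl, Ecl, Fin.succ_ne_zero, Fin.succ_inj, Finset.sum_ite_eq,
      (Fin.succ_ne_zero _).symm, mul_ite, Finset.mul_sum] at h2
    linarith [h2]
  have h1' : x 0 ^ 2 - ∑ i : Fin 9, x i.succ ^ 2 = -1 := by
    simpa [form, sq] using h1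
  rw [hL]
  constructor
  · intro h0
    have hx1 : x 1 = - x 0 := by linarith
    have hsplit : ∑ i : Fin 9, x i.succ ^ 2
        = x (0:Fin 9).succ ^ 2 + ∑ i ∈ (Finset.univ.erase (0 : Fin 9)), x i.succ ^ 2 :=
      (Finset.add_sum_erase _ _ (Finset.mem_univ 0)).symm
    have hze : x (0:Fin 9).succ = x 1 := rfl
    have hrest : ∑ i ∈ (Finset.univ.erase (0 : Fin 9)), x i.succ ^ 2 = 1 := by
      rw [hsplit, hze, hx1] at h1'; nlinarith [h1']
    obtain ⟨j, hj, hj1, hj0⟩ := sum_sq_one hrest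
    have hjne : j ≠ 0 := Finset.ne_of_mem_erase hj
    have hsum : ∑ i : Fin 9, x i.succ = x 1 + x j.succ := by
      rw [← Finset.add_sum_erase _ _ (Finset.mem_univ (0:Fin 9)), hze]
      congr 1
      rw [← Finset.add_sum_erase _ _ hj]
      rw [Finset.sum_eq_zero, add_zero]
      intro k hk
      exact hj0 k (Finset.mem_of_mem_erase hk) (Finset.ne_of_mem_erase hk)
    have hkey : 2 * x 0 + x j.succ = 1 := by rw [hsum, hx1] at h2'; linarith
    have hpm : x j.succ = 1 ∨ x j.succ = -1 := by
      have : (x j.succ - 1) * (x j.succ + 1) = 0 := by nlinarith [hj1]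
      rcases mul_eq_zero.1 this with h | h
      · left; linarith
      · right; linarith
    rcases hpm with hp | hp
    · left
      have hx0 : x 0 = 0 := by linarith
      have hx1' : x 1 = 0 := by linarith
      refine ⟨j, hjne, funext fun k => ?_⟩
      refine Fin.cases ?_ (fun m => ?_) k
      · simpa [Ecl, (Fin.succ_ne_zero j).symm] using hx0
      · by_cases hmj : m = j
        · subst hmj; simpa [Ecl] using hp
        · simp [Ecl, Fin.succ_inj, hmj]
          by_cases hm0 : m = 0
          · subst hm0; exact hx1'
          · exact hj0 m (Finset.mem_erase.2 ⟨hm0, Finset.mem_univ _⟩) hmj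
    · right
      have hx0 : x 0 = 1 := by linarith
      have hx1' : x 1 = -1 := by linarith
      refine ⟨j, hjne, funext fun k => ?_⟩
      refine Fin.cases ?_ (fun m => ?_) k
      · simpa [Hcl, Ecl, (Fin.succ_ne_zero _).symm] using hx0
      · by_cases hmj : m = j
        · subst hmj
          simp [Hcl, Ecl, Fin.succ_ne_zero, Fin.succ_inj, succ_eq_one', hjne]
          exact hp
        · by_cases hm0 : m = 0
          · subst hm0
            simpa [Hcl, Ecl, Fin.succ_ne_zero, Fin.succ_inj, one_eq_succ', hjne] using hx1'
          · have := hj0 m (Finset.mem_erase.2 ⟨hm0, Finset.mem_univ _⟩) hmj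
            simpa [Hcl, Ecl, Fin.succ_ne_zero, Fin.succ_inj, succ_eq_one', one_eq_succ', hm0, hmj] using this
  · rintro (⟨i, hi, rfl⟩ | ⟨i, hi, rfl⟩)
    · simp [Ecl, Fin.succ_ne_zero, Fin.succ_inj, succ_eq_one', zero_ne_succ', one_eq_succ', hi]
    · simp [Hcl, Ecl, Fin.succ_ne_zero, Fin.succ_inj, succ_eq_one', zero_ne_succ', one_eq_succ', hi, Ne.symm hi]
end

section
/- Fix an integer n ≥ 2 and let A_2 = (n/2)(H − E_1) + (n − 3/2)F ∈ L ⊗ ℚ. Then ⟨A_2, F⟩ = n > 0, ⟨A_2, x⟩ > 0 for every x ∈ 𝓔, and ⟨A_2, A_2⟩ = 2n² − 3n > 0. (These inequalities show A_2 is ample on X, since the cone of curves of X is spanned by F and the (−1)-curves.) -/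
set_option maxHeartbeats 1000000 in
theorem key_sum (a b c2 c3 c4 c5 c6 c7 c8 c9 : ℤ)
    (h1 : a^2 - (b^2 + c2^2 + c3^2 + c4^2 + c5^2 + c6^2 + c7^2 + c8^2 + c9^2) = -1)
    (h2 : 3*a + (b + c2 + c3 + c4 + c5 + c6 + c7 + c8 + c9) = 1) :
    0 ≤ a + b := by
  by_contra h
  push_neg at h
  have hb : b ≤ -1 - a := by omega
  have hcs : (c2 + c3 + c4 + c5 + c6 + c7 + c8 + c9)^2
      ≤ 8 * (c2^2 + c3^2 + c4^2 + c5^2 + c6^2 + c7^2 + c8^2 + c9^2) := by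
    have hid : 8 * (c2^2 + c3^2 + c4^2 + c5^2 + c6^2 + c7^2 + c8^2 + c9^2)
        - (c2 + c3 + c4 + c5 + c6 + c7 + c8 + c9)^2 =
        (c2-c3)^2 + (c2-c4)^2 + (c2-c5)^2 + (c2-c6)^2 + (c2-c7)^2 + (c2-c8)^2 + (c2-c9)^2
        + ((c3-c4)^2 + (c3-c5)^2 + (c3-c6)^2 + (c3-c7)^2 + (c3-c8)^2 + (c3-c9)^2)
        + ((c4-c5)^2 + (c4-c6)^2 + (c4-c7)^2 + (c4-c8)^2 + (c4-c9)^2)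
        + ((c5-c6)^2 + (c5-c7)^2 + (c5-c8)^2 + (c5-c9)^2)
        + ((c6-c7)^2 + (c6-c8)^2 + (c6-c9)^2)
        + ((c7-c8)^2 + (c7-c9)^2) + (c8-c9)^2 := by ring
    nlinarith [hid, sq_nonneg (c2-c3)]
  have hle : c2 + c3 + c4 + c5 + c6 + c7 + c8 + c9
      ≤ c2^2 + c3^2 + c4^2 + c5^2 + c6^2 + c7^2 + c8^2 + c9^2 := by
    have := Int.le_self_sq c2
    have := Int.le_self_sq c3
    have := Int.le_self_sq c4
    have := Int.le_self_sq c5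
    have := Int.le_self_sq c6
    have := Int.le_self_sq c7
    have := Int.le_self_sq c8
    have := Int.le_self_sq c9
    linarith
  set S1 : ℤ := c2 + c3 + c4 + c5 + c6 + c7 + c8 + c9 with hS1
  set S2 : ℤ := c2^2 + c3^2 + c4^2 + c5^2 + c6^2 + c7^2 + c8^2 + c9^2 with hS2
  have e1 : S1 = 1 - 3*a - b := by omega
  have e2 : S2 = a^2 - b^2 + 1 := by omega
  clear_value S1 S2
  clear hS1 hS2 h1 h2
  subst e1 e2
  rcases eq_or_lt_of_le hb with hbe | hbl
  · subst hbe
    nlinarith [hle]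
  · have hb2 : b ≤ -2 - a := by omega
    nlinarith [hcs, sq_nonneg (a + 3*b + 1)]

set_option maxHeartbeats 1000000

/-- Fix `n ≥ 2` and let `A_2 = (n/2)(H - E_1) + (n - 3/2)F`.
Then `⟨A_2,F⟩ = n > 0`, `⟨A_2,x⟩ > 0` for every `(-1)`-class `x ∈ 𝓔`, and
`⟨A_2,A_2⟩ = 2n² - 3n > 0`. (These inequalities show `A_2` is ample on `X`,
since the cone of curves of `X` is spanned by `F` and the `(-1)`-curves.) -/



theorem A2_is_ample (n : ℤ) (hn : 2 ≤ n) :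
    formR (((n : ℝ) / 2) • (toR Hcl - toR (Ecl 0)) + ((n : ℝ) - 3 / 2) • toR Fcl)
        (toR Fcl) = (n : ℝ) ∧
    (0 : ℝ) < (n : ℝ) ∧
    (∀ x ∈ negCurves,
      0 < formR (((n : ℝ) / 2) • (toR Hcl - toR (Ecl 0)) + ((n : ℝ) - 3 / 2) • toR Fcl)
        (toR x)) ∧
    formR (((n : ℝ) / 2) • (toR Hcl - toR (Ecl 0)) + ((n : ℝ) - 3 / 2) • toR Fcl)
        (((n : ℝ) / 2) • (toR Hcl - toR (Ecl 0)) + ((n : ℝ) - 3 / 2) • toR Fcl)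
      = 2 * (n : ℝ) ^ 2 - 3 * (n : ℝ) ∧
    (0 : ℝ) < 2 * (n : ℝ) ^ 2 - 3 * (n : ℝ) := by
  
  have hnR : (2:ℝ) ≤ (n:ℝ) := by exact_mod_cast hn
  refine ⟨?_, by linarith, ?_, ?_, by nlinarith⟩
  · simp [formR, toR, Hcl, Ecl, Fcl, Fin.sum_univ_succ, Fin.succ]
    ring
  · intro x hx
    obtain ⟨h1, h2⟩ := hx
    have hF : ∀ j, Fcl j = if j = 0 then 3 else -1 := by decide
    simp only [form, Fin.sum_univ_succ, Fin.sum_univ_zero] at h1 h2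
    simp only [hF] at h2
    norm_num [Fin.succ, Fin.ext_iff] at h1 h2
    simp only [show ∀ h, (⟨2,h⟩ : Fin 10) = 2 from fun _ => rfl,
      show ∀ h, (⟨3,h⟩ : Fin 10) = 3 from fun _ => rfl,
      show ∀ h, (⟨4,h⟩ : Fin 10) = 4 from fun _ => rfl,
      show ∀ h, (⟨5,h⟩ : Fin 10) = 5 from fun _ => rfl,
      show ∀ h, (⟨6,h⟩ : Fin 10) = 6 from fun _ => rfl,
      show ∀ h, (⟨7,h⟩ : Fin 10) = 7 from fun _ => rfl,
      show ∀ h, (⟨8,h⟩ : Fin 10) = 8 from fun _ => rfl,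
      show ∀ h, (⟨9,h⟩ : Fin 10) = 9 from fun _ => rfl] at h1 h2
    have h1' : (x 0)^2 - ((x 1)^2 + (x 2)^2 + (x 3)^2 + (x 4)^2 + (x 5)^2 + (x 6)^2 + (x 7)^2 + (x 8)^2 + (x 9)^2) = -1 := by
      linear_combination h1
    have h2' : 3 * x 0 + (x 1 + x 2 + x 3 + x 4 + x 5 + x 6 + x 7 + x 8 + x 9) = 1 := by
      linear_combination h2
    have hkey : 0 ≤ x 0 + x 1 := key_sum _ _ _ _ _ _ _ _ _ _ h1' h2'
    have hval : formR (((n:ℝ) / 2) • (toR Hcl - toR (Ecl 0)) + ((n:ℝ) - 3 / 2) • toR Fcl) (toR x)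
        = ((n:ℝ)/2) * ((x 0 : ℝ) + (x 1 : ℝ)) + (n:ℝ) - 3/2 := by
      simp only [formR, toR, Hcl, Ecl, Fcl, Fin.sum_univ_succ, Fin.sum_univ_zero,
        Pi.add_apply, Pi.smul_apply, Pi.sub_apply, smul_eq_mul]
      norm_num [Fin.succ, Fin.ext_iff]
      simp only [show ∀ h, (⟨2,h⟩ : Fin 10) = 2 from fun _ => rfl,
        show ∀ h, (⟨3,h⟩ : Fin 10) = 3 from fun _ => rfl,
        show ∀ h, (⟨4,h⟩ : Fin 10) = 4 from fun _ => rfl,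
        show ∀ h, (⟨5,h⟩ : Fin 10) = 5 from fun _ => rfl,
        show ∀ h, (⟨6,h⟩ : Fin 10) = 6 from fun _ => rfl,
        show ∀ h, (⟨7,h⟩ : Fin 10) = 7 from fun _ => rfl,
        show ∀ h, (⟨8,h⟩ : Fin 10) = 8 from fun _ => rfl,
        show ∀ h, (⟨9,h⟩ : Fin 10) = 9 from fun _ => rfl]
      push_cast
      have hx : ((x 2 : ℝ) + x 3 + x 4 + x 5 + x 6 + x 7 + x 8 + x 9) = 1 - 3*(x 0:ℝ) - (x 1:ℝ) := by
        exact_mod_cast congrArg (Int.cast : ℤ → ℝ) (by linarith [h2'] : (x 2 + x 3 + x 4 + x 5 + x 6 + x 7 + x 8 + x 9 : ℤ) = 1 - 3*x 0 - x 1)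
      have hxn : (n:ℝ) * ((x 2 : ℝ) + x 3 + x 4 + x 5 + x 6 + x 7 + x 8 + x 9)
          = (n:ℝ) * (1 - 3*(x 0:ℝ) - (x 1:ℝ)) := by rw [hx]
      ring_nf
      ring_nf at hx hxn
      linarith [hx, hxn]
    rw [hval]
    have : (0:ℝ) ≤ (x 0 : ℝ) + (x 1 : ℝ) := by exact_mod_cast hkey
    nlinarith
  · simp [formR, toR, Hcl, Ecl, Fcl, Fin.sum_univ_succ, Fin.succ]
    ring
end
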